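/- Let p ≥ 1. Starting from u₀, let u_j = q(u_{j−1}) for j = 1, …, p−1, and let u_p be produced by a single NGMRES(p−1) step from u₀, …, u_{p−1}. Then u_p is the p-th full GMRES iterate from u₀; that is, u_p ∈ u₀ + K_p(A, r₀) and ‖A u_p − b‖ = min{‖A u − b‖ : u ∈ u₀ + K_p(A, r₀)}. -/

import Mathlib

open Matrix Polynomial Set

noncomputable section

/-- Matrix–vector product, landing in Euclidean space. -/
def mulVecE {n : ℕ} (M : Matrix (Fin n) (Fin n) ℝ) (v : EuclideanSpace ℝ (Fin n)) :
    EuclideanSpace ℝ (Fin n) :=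
  WithLp.toLp 2 (M.mulVec v)

/-- Residual `r(u) = A u - b`. -/
def res {n : ℕ} (A : Matrix (Fin n) (Fin n) ℝ) (b u : EuclideanSpace ℝ (Fin n)) :
    EuclideanSpace ℝ (Fin n) :=
  mulVecE A u - b

/-- Richardson fixed-point map `q(u) = (I - A) u + b = M u + b` with `M = I - A`. -/
def fp {n : ℕ} (A : Matrix (Fin n) (Fin n) ℝ) (b u : EuclideanSpace ℝ (Fin n)) :
    EuclideanSpace ℝ (Fin n) :=
  mulVecE (1 - A) u + b

/-- The NGMRES(m) least-squares objective at step `k`: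
`β ↦ ‖r(q(u_k)) + Σ_{i=0}^m β_i (r(q(u_k)) - r(u_{k-i}))‖`. -/
def ngObj {n : ℕ} (A : Matrix (Fin n) (Fin n) ℝ) (b : EuclideanSpace ℝ (Fin n))
    (m : ℕ) (prev : ℕ → EuclideanSpace ℝ (Fin n)) (k : ℕ) (β : Fin (m+1) → ℝ) : ℝ :=
  ‖res A b (fp A b (prev k)) +
    ∑ i : Fin (m+1), β i • (res A b (fp A b (prev k)) - res A b (prev (k - (i : ℕ))))‖

/-- `next` is produced from `prev (k-m), …, prev k` by a single NGMRES(m) step: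
`next = q(u_k) + Σ_{i=0}^m β_i (q(u_k) - u_{k-i})` where `β` minimizes the
least-squares objective `ngObj`. -/
def NGMRESStep {n : ℕ} (A : Matrix (Fin n) (Fin n) ℝ) (b : EuclideanSpace ℝ (Fin n))
    (m : ℕ) (prev : ℕ → EuclideanSpace ℝ (Fin n)) (k : ℕ)
    (next : EuclideanSpace ℝ (Fin n)) : Prop :=
  ∃ β : Fin (m+1) → ℝ,
    (∀ γ : Fin (m+1) → ℝ, ngObj A b m prev k β ≤ ngObj A b m prev k γ) ∧
    next = fp A b (prev k) +
      ∑ i : Fin (m+1), β i • (fp A b (prev k) - prev (k - (i : ℕ)))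

/-- The spectral (ℓ²-operator) norm of a matrix. -/
def opNorm {n : ℕ} (M : Matrix (Fin n) (Fin n) ℝ) : ℝ :=
  ‖(Matrix.toEuclideanCLM (𝕜 := ℝ) M : EuclideanSpace ℝ (Fin n) →L[ℝ] EuclideanSpace ℝ (Fin n))‖

/-- The 2-norm condition number `κ₂(U) = ‖U‖ ‖U⁻¹‖`. -/
def condNum {n : ℕ} (U : Matrix (Fin n) (Fin n) ℝ) : ℝ :=
  opNorm U * opNorm U⁻¹

/-- `ε(a,b,s)`: minimum over real polynomials `p` of degree at most `s` with `p(1) = 1`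
of `max_{t ∈ [1/b, 1/a]} |p(t)|`. -/
def eps (a b : ℝ) (s : ℕ) : ℝ :=
  sInf {t : ℝ | ∃ p : Polynomial ℝ, p.natDegree ≤ s ∧ p.eval 1 = 1 ∧
    t = sSup ((fun x => |p.eval x|) '' Set.Icc (1/b) (1/a))}

/-- `χ(s)`: minimum over real polynomials `p` of degree at most `s` with `p(1) = 1`
of `max_{λ ∈ Σ(M)} |p(λ)|`, where `Σ(M)` is the set of eigenvalues of `M`. -/
def chiSp {n : ℕ} (M : Matrix (Fin n) (Fin n) ℝ) (s : ℕ) : ℝ :=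
  sInf {t : ℝ | ∃ p : Polynomial ℝ, p.natDegree ≤ s ∧ p.eval 1 = 1 ∧
    t = sSup ((fun x => |p.eval x|) '' spectrum ℝ M)}

/-- The Krylov subspace `K_k(A, r) = span{r, Ar, …, A^{k-1} r}`. -/
def Krylov {n : ℕ} (A : Matrix (Fin n) (Fin n) ℝ) (r : EuclideanSpace ℝ (Fin n)) (k : ℕ) :
    Submodule ℝ (EuclideanSpace ℝ (Fin n)) :=
  Submodule.span ℝ (Set.range fun i : Fin k => mulVecE (A ^ (i : ℕ)) r)

/-- The matrix `S_k = [u_{k-m+1}-u_{k-m}, …, u_k-u_{k-1}, q(u_k)-u_k] ∈ ℝ^{n×(m+1)}`. -/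
def Smat {n : ℕ} (A : Matrix (Fin n) (Fin n) ℝ) (b : EuclideanSpace ℝ (Fin n))
    (prev : ℕ → EuclideanSpace ℝ (Fin n)) (k m : ℕ) :
    Matrix (Fin n) (Fin (m+1)) ℝ :=
  Matrix.of fun r c =>
    if (c : ℕ) < m then prev (k - m + c + 1) r - prev (k - m + c) r
    else fp A b (prev k) r - prev k r

/-- `u` is the sequence of aNGMRES(m, p) iterates (with `m = ⊤` giving aNGMRES(∞, p)):
if `p ∤ k` then `u_k = q(u_{k-1})`, and if `p ∣ k` then `u_k` is produced by one
NGMRES(min(m, k-1)) step from `u_{k-1-m_k}, …, u_{k-1}`. -/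
def aNGMRES {n : ℕ} (A : Matrix (Fin n) (Fin n) ℝ) (b : EuclideanSpace ℝ (Fin n))
    (m : ℕ∞) (p : ℕ) (u : ℕ → EuclideanSpace ℝ (Fin n)) : Prop :=
  ∀ k, 1 ≤ k →
    (¬ p ∣ k → u k = fp A b (u (k-1))) ∧
    (p ∣ k → NGMRESStep A b (min m ((k : ℕ∞) - 1)).toNat u (k-1) (u k))

/-! ### Auxiliary lemmas for `stmt_9` -/

section Stmt9Aux

variable {n : ℕ}

lemma mulVecE_add' (M : Matrix (Fin n) (Fin n) ℝ) (x y : EuclideanSpace ℝ (Fin n)) :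
    mulVecE M (x + y) = mulVecE M x + mulVecE M y := by simp [mulVecE, Matrix.mulVec_add]

lemma mulVecE_sub' (M : Matrix (Fin n) (Fin n) ℝ) (x y : EuclideanSpace ℝ (Fin n)) :
    mulVecE M (x - y) = mulVecE M x - mulVecE M y := by simp [mulVecE, Matrix.mulVec_sub]

lemma mulVecE_smul' (M : Matrix (Fin n) (Fin n) ℝ) (c : ℝ) (x : EuclideanSpace ℝ (Fin n)) :
    mulVecE M (c • x) = c • mulVecE M x := by simp [mulVecE, Matrix.mulVec_smul]

lemma add_mulVecE' (M N : Matrix (Fin n) (Fin n) ℝ) (x : EuclideanSpace ℝ (Fin n)) :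
    mulVecE (M + N) x = mulVecE M x + mulVecE N x := by simp [mulVecE, Matrix.add_mulVec]

lemma sub_mulVecE' (M N : Matrix (Fin n) (Fin n) ℝ) (x : EuclideanSpace ℝ (Fin n)) :
    mulVecE (M - N) x = mulVecE M x - mulVecE N x := by simp [mulVecE, Matrix.sub_mulVec]

lemma smul_mulVecE' (c : ℝ) (M : Matrix (Fin n) (Fin n) ℝ) (x : EuclideanSpace ℝ (Fin n)) :
    mulVecE (c • M) x = c • mulVecE M x := by simp [mulVecE, Matrix.smul_mulVec]

lemma one_mulVecE' (x : EuclideanSpace ℝ (Fin n)) : mulVecE 1 x = x := by simp [mulVecE]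

lemma mul_mulVecE' (M N : Matrix (Fin n) (Fin n) ℝ) (x : EuclideanSpace ℝ (Fin n)) :
    mulVecE (M * N) x = mulVecE M (mulVecE N x) := by simp [mulVecE, Matrix.mulVec_mulVec]

lemma sum_mulVecE' {ι : Type*} (s : Finset ι) (f : ι → Matrix (Fin n) (Fin n) ℝ)
    (x : EuclideanSpace ℝ (Fin n)) :
    mulVecE (∑ i ∈ s, f i) x = ∑ i ∈ s, mulVecE (f i) x := by
  classical
  induction s using Finset.induction with
  | empty => simp [mulVecE]
  | insert _ _ h ih => simp [Finset.sum_insert h, add_mulVecE', ih]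

lemma mulVecE_sumv {ι : Type*} (M : Matrix (Fin n) (Fin n) ℝ) (s : Finset ι)
    (f : ι → EuclideanSpace ℝ (Fin n)) :
    mulVecE M (∑ i ∈ s, f i) = ∑ i ∈ s, mulVecE M (f i) := by
  classical
  induction s using Finset.induction with
  | empty => simp [mulVecE]
  | insert _ _ h ih => simp [Finset.sum_insert h, mulVecE_add', ih]

lemma res_fp' (A : Matrix (Fin n) (Fin n) ℝ) (b v : EuclideanSpace ℝ (Fin n)) :
    res A b (fp A b v) = mulVecE (1 - A) (res A b v) := by
  simp only [res, fp, mulVecE_add', mulVecE_sub', sub_mulVecE', one_mulVecE']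
  abel

lemma fp_sub_self' (A : Matrix (Fin n) (Fin n) ℝ) (b v : EuclideanSpace ℝ (Fin n)) :
    fp A b v - v = -(res A b v) := by
  simp only [res, fp, sub_mulVecE', one_mulVecE']
  abel

lemma res_add' (A : Matrix (Fin n) (Fin n) ℝ) (b x v : EuclideanSpace ℝ (Fin n)) :
    res A b (x + v) = res A b x + mulVecE A v := by
  simp only [res, mulVecE_add']
  abel

lemma res_combo (A : Matrix (Fin n) (Fin n) ℝ) (b : EuclideanSpace ℝ (Fin n))
    (x : EuclideanSpace ℝ (Fin n)) {ι : Type*} [Fintype ι] (β : ι → ℝ)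
    (y : ι → EuclideanSpace ℝ (Fin n)) :
    res A b (x + ∑ i, β i • (x - y i)) =
      res A b x + ∑ i, β i • (res A b x - res A b (y i)) := by
  rw [res_add', mulVecE_sumv]
  congr 1
  refine Finset.sum_congr rfl fun i _ => ?_
  rw [mulVecE_smul', mulVecE_sub']
  congr 1
  simp only [res]
  abel

lemma aeval_mem_Krylov {p : ℕ} (A : Matrix (Fin n) (Fin n) ℝ) (r0 : EuclideanSpace ℝ (Fin n))
    (Q : Polynomial ℝ) (hQ : Q.natDegree < p) :
    mulVecE (aeval A Q) r0 ∈ Krylov A r0 p := by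
  rw [Q.as_sum_range' p hQ, map_sum, sum_mulVecE']
  refine Submodule.sum_mem _ fun i hi => ?_
  have h : (aeval A (monomial i (Q.coeff i)) : Matrix (Fin n) (Fin n) ℝ)
      = Q.coeff i • A ^ i := by
    simp [aeval_monomial, Algebra.algebraMap_eq_smul_one, smul_mul_assoc]
  rw [h, smul_mulVecE']
  exact Submodule.smul_mem _ _
    (Submodule.subset_span ⟨⟨i, Finset.mem_range.mp hi⟩, rfl⟩)

lemma natDegree_one_sub_X_le : ((1 : Polynomial ℝ) - Polynomial.X).natDegree ≤ 1 :=
  (Polynomial.natDegree_sub_le _ _).trans (by simp)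

lemma Mpow_mem_Krylov {p : ℕ} (A : Matrix (Fin n) (Fin n) ℝ) (r0 : EuclideanSpace ℝ (Fin n))
    {t : ℕ} (ht : t < p) : mulVecE ((1 - A) ^ t) r0 ∈ Krylov A r0 p := by
  have h : ((1 : Matrix (Fin n) (Fin n) ℝ) - A) ^ t
      = aeval A (((1 : Polynomial ℝ) - Polynomial.X) ^ t) := by
    simp
  rw [h]
  refine aeval_mem_Krylov A r0 _ (lt_of_le_of_lt ?_ ht)
  calc (((1 : Polynomial ℝ) - Polynomial.X) ^ t).natDegree
      ≤ t * ((1 : Polynomial ℝ) - Polynomial.X).natDegree := Polynomial.natDegree_pow_le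
    _ ≤ t * 1 := Nat.mul_le_mul_left t natDegree_one_sub_X_le
    _ = t := Nat.mul_one t

end Stmt9Aux

/-- p-1 Richardson steps followed by one NGMRES(p-1) step produce
the p-th full GMRES iterate. -/
theorem stmt_9 {n p : ℕ} (hp : 1 ≤ p) (A : Matrix (Fin n) (Fin n) ℝ) (hA : IsUnit A)
    (b : EuclideanSpace ℝ (Fin n)) (u : ℕ → EuclideanSpace ℝ (Fin n))
    (hfp : ∀ j, 1 ≤ j → j ≤ p - 1 → u j = fp A b (u (j-1)))
    (next : EuclideanSpace ℝ (Fin n)) (hstep : NGMRESStep A b (p-1) u (p-1) next) :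
    (next - u 0) ∈ Krylov A (res A b (u 0)) p ∧
      ∀ w ∈ Krylov A (res A b (u 0)) p, ‖res A b next‖ ≤ ‖res A b (u 0 + w)‖ := by
  obtain ⟨m, rfl⟩ : ∃ m, p = m + 1 := ⟨p - 1, (Nat.succ_pred_eq_of_pos hp).symm⟩
  clear hp hA
  simp only [Nat.add_sub_cancel] at hfp hstep
  set r0 := res A b (u 0) with hr0
  set M : Matrix (Fin n) (Fin n) ℝ := 1 - A with hM
  -- residuals of the Richardson iterates
  have hres : ∀ j, j ≤ m → res A b (u j) = mulVecE (M ^ j) r0 := by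
    intro j hj
    induction j with
    | zero => simp [one_mulVecE', hr0]
    | succ j ih =>
      rw [hfp (j+1) (Nat.succ_le_succ (Nat.zero_le _)) hj, Nat.add_sub_cancel,
        res_fp', ih (Nat.le_of_succ_le hj), ← mul_mulVecE', ← hM, ← pow_succ']
  have hresq : res A b (fp A b (u m)) = mulVecE (M ^ (m+1)) r0 := by
    rw [res_fp', hres m le_rfl, ← mul_mulVecE', ← hM, ← pow_succ']
  -- differences lie in the Krylov space
  have hdiffmem : ∀ d, d ≤ m → fp A b (u m) - u (m - d) ∈ Krylov A r0 (m+1) := by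
    intro d hd
    induction d with
    | zero =>
      rw [Nat.sub_zero, fp_sub_self', hres m le_rfl]
      exact Submodule.neg_mem _ (Mpow_mem_Krylov A r0 (Nat.lt_succ_self m))
    | succ d ih =>
      have h2 : fp A b (u m) - u (m - (d+1)) =
          (fp A b (u m) - u (m - d)) + (u (m - d) - u (m - (d+1))) := by abel
      rw [h2]
      refine Submodule.add_mem _ (ih (by omega)) ?_
      have h3 : u (m - d) = fp A b (u (m - (d+1))) := by
        have h1 : m - d = (m - (d+1)) + 1 := by omega
        rw [h1, hfp ((m - (d+1)) + 1) (by omega) (by omega), Nat.add_sub_cancel]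
      rw [h3]
      have h4 : fp A b (u (m - (d+1))) - u (m - (d+1)) = -(res A b (u (m - (d+1)))) :=
        fp_sub_self' A b _
      rw [h4, hres (m - (d+1)) (by omega)]
      exact Submodule.neg_mem _ (Mpow_mem_Krylov A r0 (by omega))
  obtain ⟨β, hmin, hnext⟩ := hstep
  constructor
  · -- Part 1: next - u 0 ∈ K_{m+1}
    rw [hnext]
    have h5 : fp A b (u m) + (∑ i : Fin (m+1), β i • (fp A b (u m) - u (m - (i:ℕ)))) - u 0
        = (fp A b (u m) - u (m - m)) +
          ∑ i : Fin (m+1), β i • (fp A b (u m) - u (m - (i:ℕ))) := by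
      rw [Nat.sub_self]; abel
    rw [h5]
    refine Submodule.add_mem _ (hdiffmem m le_rfl) (Submodule.sum_mem _ fun i _ => ?_)
    exact Submodule.smul_mem _ _ (hdiffmem (i:ℕ) (Nat.le_of_lt_succ i.isLt))
  · -- Part 2: optimality
    intro w hw
    -- the residual of `next` is the objective value at β
    have hrnext : res A b next = res A b (fp A b (u m)) +
        ∑ i : Fin (m+1), β i • (res A b (fp A b (u m)) - res A b (u (m - (i:ℕ)))) := by
      rw [hnext, res_combo]
    -- extract coefficients of w
    have hw' : w ∈ Submodule.span ℝ
        (Set.range fun i : Fin (m+1) => mulVecE (A ^ (i:ℕ)) r0) := hw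
    obtain ⟨c, hc⟩ := (Submodule.mem_span_range_iff_exists_fun (R := ℝ)).mp hw'
    -- polynomials
    set P : Polynomial ℝ :=
      1 + ∑ i : Fin (m+1), Polynomial.C (c i) * Polynomial.X ^ ((i:ℕ)+1) with hP
    set Pt : Polynomial ℝ := P.comp (1 - Polynomial.X) with hPt
    set a : ℕ → ℝ := fun j => Pt.coeff j with ha
    set γ : Fin (m+1) → ℝ := fun i => -(a (m - (i:ℕ))) with hγ
    have hdegP : P.natDegree ≤ m + 1 := by
      refine (Polynomial.natDegree_add_le _ _).trans (max_le (by simp) ?_)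
      refine Polynomial.natDegree_sum_le_of_forall_le _ _ fun i _ => ?_
      exact (Polynomial.natDegree_C_mul_le _ _).trans
        (by simpa using Nat.succ_le_succ (Nat.le_of_lt_succ i.isLt))
    have hdegPt : Pt.natDegree < m + 2 := by
      have := Polynomial.natDegree_comp_le (p := P) (q := 1 - Polynomial.X)
      have h6 : P.natDegree * ((1 : Polynomial ℝ) - Polynomial.X).natDegree ≤ (m+1) * 1 :=
        Nat.mul_le_mul hdegP natDegree_one_sub_X_le
      exact lt_of_le_of_lt (this.trans (by simpa using h6)) (by omega)
    have hPeval0 : P.eval 0 = 1 := by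
      simp [hP, Polynomial.eval_finset_sum, zero_pow]
    have hPteval1 : Pt.eval 1 = 1 := by
      rw [hPt, Polynomial.eval_comp]
      simpa using hPeval0
    have hsum1 : ∑ j ∈ Finset.range (m+2), a j = 1 := by
      have h7 := Pt.as_sum_range' (m+2) hdegPt
      calc ∑ j ∈ Finset.range (m+2), a j = Pt.eval 1 := by
            conv_rhs => rw [h7]
            simp [ha, Polynomial.eval_finset_sum, Polynomial.eval_monomial]
        _ = 1 := hPteval1
    -- reindexing lemma
    have hrev : ∀ f : ℕ → Polynomial ℝ,
        ∑ i : Fin (m+1), f (m - (i:ℕ)) = ∑ i : Fin (m+1), f (i:ℕ) := by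
      intro f
      refine Fintype.sum_bijective Fin.rev Fin.rev_bijective _ _ fun i => ?_
      congr 1
      simp [Fin.val_rev]
    -- the polynomial identity
    have polyid : (Polynomial.X : Polynomial ℝ)^(m+1) +
        ∑ i : Fin (m+1), Polynomial.C (γ i) *
          ((Polynomial.X : Polynomial ℝ)^(m+1) - Polynomial.X ^ (m - (i:ℕ))) = Pt := by
      have h8 : ∑ i : Fin (m+1), Polynomial.C (γ i) *
          ((Polynomial.X : Polynomial ℝ)^(m+1) - Polynomial.X ^ (m - (i:ℕ)))
          = ∑ j ∈ Finset.range (m+1), Polynomial.C (-(a j)) *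
            ((Polynomial.X : Polynomial ℝ)^(m+1) - Polynomial.X ^ j) := by
        rw [← Fin.sum_univ_eq_sum_range]
        exact hrev fun j => Polynomial.C (-(a j)) *
          ((Polynomial.X : Polynomial ℝ)^(m+1) - Polynomial.X ^ j)
      rw [h8]
      have h9 : Pt = ∑ j ∈ Finset.range (m+1), Polynomial.C (a j) * Polynomial.X ^ j
          + Polynomial.C (a (m+1)) * Polynomial.X ^ (m+1) := by
        conv_lhs => rw [Pt.as_sum_range' (m+2) hdegPt]
        rw [Finset.sum_range_succ]
        simp [Polynomial.C_mul_X_pow_eq_monomial, ha]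
      have h10 : Polynomial.C (a (m+1)) =
          1 - ∑ j ∈ Finset.range (m+1), Polynomial.C (a j) := by
        rw [← Polynomial.C_1, ← map_sum, ← map_sub]
        congr 1
        have := hsum1
        rw [Finset.sum_range_succ] at this
        linarith
      rw [h9, h10]
      simp only [map_neg, neg_mul, mul_sub, Finset.sum_neg_distrib, Finset.sum_sub_distrib,
        ← Finset.sum_mul]
      ring
    -- evaluate the polynomial identity at M
    have haevalsub : (Polynomial.aeval M) ((1 : Polynomial ℝ) - Polynomial.X) = A := by
      rw [map_sub, Polynomial.aeval_one, Polynomial.aeval_X, hM, sub_sub_cancel]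
    have hMPt : (Polynomial.aeval M) Pt = (Polynomial.aeval A) P := by
      rw [hPt, Polynomial.aeval_comp, haevalsub]
    -- target residual
    have htarget : res A b (u 0 + w) = mulVecE ((Polynomial.aeval A) P) r0 := by
      rw [res_add', ← hr0, hP]
      rw [map_add, _root_.map_one, map_sum]
      rw [add_mulVecE', one_mulVecE', sum_mulVecE']
      congr 1
      rw [← hc, mulVecE_sumv]
      refine Finset.sum_congr rfl fun i _ => ?_
      rw [mulVecE_smul']
      have : (Polynomial.aeval A) (Polynomial.C (c i) * Polynomial.X ^ ((i:ℕ)+1))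
          = c i • (A ^ ((i:ℕ)+1)) := by
        simp [Polynomial.aeval_C, Algebra.algebraMap_eq_smul_one, smul_mul_assoc]
      rw [this, smul_mulVecE', pow_succ', mul_mulVecE']
    -- achievable residual at γ
    have hachieve : res A b (fp A b (u m)) +
        ∑ i : Fin (m+1), γ i • (res A b (fp A b (u m)) - res A b (u (m - (i:ℕ))))
        = res A b (u 0 + w) := by
      have h11 : ∀ i : Fin (m+1), res A b (u (m - (i:ℕ)))
          = mulVecE (M ^ (m - (i:ℕ))) r0 := fun i => hres _ (Nat.sub_le m _)
      calc res A b (fp A b (u m)) +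
            ∑ i : Fin (m+1), γ i • (res A b (fp A b (u m)) - res A b (u (m - (i:ℕ))))
          = mulVecE ((Polynomial.aeval M) ((Polynomial.X : Polynomial ℝ)^(m+1) +
              ∑ i : Fin (m+1), Polynomial.C (γ i) *
                ((Polynomial.X : Polynomial ℝ)^(m+1) - Polynomial.X ^ (m - (i:ℕ))))) r0 := by
            rw [map_add, map_sum, Polynomial.aeval_X_pow, add_mulVecE', sum_mulVecE', hresq]
            congr 1
            refine Finset.sum_congr rfl fun i _ => ?_
            have : (Polynomial.aeval M) (Polynomial.C (γ i) *
                ((Polynomial.X : Polynomial ℝ)^(m+1) - Polynomial.X ^ (m - (i:ℕ))))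
                = γ i • (M ^ (m+1) - M ^ (m - (i:ℕ))) := by
              simp [Polynomial.aeval_C, Algebra.algebraMap_eq_smul_one, smul_mul_assoc]
            rw [this, smul_mulVecE', sub_mulVecE', h11 i]
        _ = mulVecE ((Polynomial.aeval M) Pt) r0 := by rw [polyid]
        _ = res A b (u 0 + w) := by rw [hMPt, htarget]
    -- conclude
    have h12 : ‖res A b next‖ = ngObj A b m u m β := by
      rw [ngObj, hrnext]
    have h13 : ngObj A b m u m γ = ‖res A b (u 0 + w)‖ := by
      rw [ngObj, hachieve]
    rw [h12, ← h13]
    exact hmin γ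



end
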